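/- If the weight system is decreasing, β := 2e(1−p) satisfies β < 1 (where e is Euler's number), and w(S)(ω) is defined as w(N)(ω) when h_N(ω) ≤ μ and 0 otherwise, then E[w(N)] ≤ E[w(S)] + ((μ+1−μβ)·β^μ/(1−β)²)·E[w(S)], where expectations are Lebesgue integrals with respect to ℙ and the real coefficient (μ+1−μβ)·β^μ/(1−β)² is coerced to ℝ≥0∞ via ENNReal.ofReal. -/

import Mathlib

open MeasureTheory ENNReal
open scoped Classical

noncomputable section

/-- The number of indices `t < n` with `ω t = true`. -/
def countTrue (ω : ℕ → Bool) (n : ℕ) : ℕ :=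
  ((Finset.range n).filter fun t => ω t = true).card

/-- The least `T : ℕ` such that exactly `μ` of `ω 0, …, ω (T-1)` are `true`
(`∞` if no such `T` exists). -/
def tau (μ : ℕ) (ω : ℕ → Bool) : ℕ∞ :=
  sInf {T : ℕ∞ | ∃ n : ℕ, T = (n : ℕ∞) ∧ countTrue ω n = μ}

/-- `w(N)(ω) = Σ_{t < τ(ω), ω t = false} w t ω`. -/
def wOfN (μ : ℕ) (w : ℕ → (ℕ → Bool) → ℝ≥0∞) (ω : ℕ → Bool) : ℝ≥0∞ :=
  ∑' t : ℕ, if (t : ℕ∞) < tau μ ω ∧ ω t = false then w t ω else 0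

/-- `h_N(ω)`: the number of indices `t < τ(ω)` with `ω t = false` (as a value in `ℝ≥0∞`). -/
def hOfN (μ : ℕ) (ω : ℕ → Bool) : ℝ≥0∞ :=
  ∑' t : ℕ, if (t : ℕ∞) < tau μ ω ∧ ω t = false then (1 : ℝ≥0∞) else 0

/-- `w(S)(ω) = w(N)(ω)` if `h_N(ω) ≤ μ`, and `0` otherwise. -/
def wOfS (μ : ℕ) (w : ℕ → (ℕ → Bool) → ℝ≥0∞) (ω : ℕ → Bool) : ℝ≥0∞ :=
  if hOfN μ ω ≤ (μ : ℝ≥0∞) then wOfN μ w ω else 0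

/-- `P` is the law of an i.i.d. sequence of coin flips with head (`true`) probability `p`:
every finite cylinder set has the product Bernoulli probability. -/
def IsBernoulliProduct (p : ℝ) (P : Measure (ℕ → Bool)) : Prop :=
  ∀ (s : Finset ℕ) (b : ℕ → Bool),
    P {ω | ∀ i ∈ s, ω i = b i} =
      ∏ i ∈ s, (if b i then ENNReal.ofReal p else ENNReal.ofReal (1 - p))

section Counting

lemma countTrue_mono (ω : ℕ → Bool) : Monotone (countTrue ω) := fun _ _ h =>
  Finset.card_le_card (Finset.filter_subset_filter _ (Finset.range_subset_range.2 h))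

lemma countTrue_succ (ω : ℕ → Bool) (n : ℕ) :
    countTrue ω (n + 1) = countTrue ω n + (if ω n = true then 1 else 0) := by
  unfold countTrue
  rw [Finset.range_add_one, Finset.filter_insert]
  split
  · rw [Finset.card_insert_of_notMem (by simp)]
  · simp

lemma exists_countTrue_eq {μ : ℕ} {ω : ℕ → Bool} {n : ℕ} (h : μ ≤ countTrue ω n) :
    ∃ m ≤ n, countTrue ω m = μ := by
  induction n with
  | zero =>
    refine ⟨0, le_rfl, ?_⟩
    have : countTrue ω 0 = 0 := by simp [countTrue]
    omega
  | succ n ih =>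
    by_cases hc : μ ≤ countTrue ω n
    · obtain ⟨m, hm, he⟩ := ih hc
      exact ⟨m, hm.trans (Nat.le_succ n), he⟩
    · have hs := countTrue_succ ω n
      refine ⟨n + 1, le_rfl, ?_⟩
      split at hs <;> omega

lemma lt_tau_iff {μ : ℕ} {ω : ℕ → Bool} {t : ℕ} :
    (t : ℕ∞) < tau μ ω ↔ countTrue ω t < μ := by
  constructor
  · intro h
    by_contra hc
    push_neg at hc
    obtain ⟨m, hm, he⟩ := exists_countTrue_eq hc
    have h1 : tau μ ω ≤ (m : ℕ∞) := sInf_le ⟨m, rfl, he⟩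
    have h2 : (m : ℕ∞) ≤ (t : ℕ∞) := by exact_mod_cast hm
    exact absurd h (not_lt.2 (h1.trans h2))
  · intro h
    have h1 : ((t : ℕ∞) + 1) ≤ tau μ ω := by
      refine le_sInf ?_
      rintro T ⟨n, rfl, hn⟩
      have htn : t < n := by
        by_contra hc
        push_neg at hc
        have := countTrue_mono ω hc
        omega
      exact_mod_cast htn
    exact (ENat.add_one_le_iff (by simp)).mp h1

lemma wOfN_eq (μ : ℕ) (w : ℕ → (ℕ → Bool) → ℝ≥0∞) (ω : ℕ → Bool) :
    wOfN μ w ω = ∑' t : ℕ, if countTrue ω t < μ ∧ ω t = false then w t ω else 0 :=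
  tsum_congr fun t => by simp only [lt_tau_iff]

lemma hOfN_eq (μ : ℕ) (ω : ℕ → Bool) :
    hOfN μ ω = ∑' t : ℕ, if countTrue ω t < μ ∧ ω t = false then (1 : ℝ≥0∞) else 0 :=
  tsum_congr fun t => by simp only [lt_tau_iff]

lemma measurable_countTrue (n : ℕ) : Measurable (fun ω : ℕ → Bool => countTrue ω n) := by
  have h : (fun ω : ℕ → Bool => countTrue ω n)
      = fun ω => ∑ t ∈ Finset.range n, if ω t = true then 1 else 0 := by
    funext ω; rw [countTrue, Finset.card_filter]
  rw [h]
  exact Finset.measurable_sum _ fun t _ =>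
    (Measurable.of_discrete (f := fun b : Bool => if b = true then (1:ℕ) else 0)).comp
      (measurable_pi_apply t)

lemma measurableSet_cond (μ t : ℕ) :
    MeasurableSet {ω : ℕ → Bool | countTrue ω t < μ ∧ ω t = false} := by
  have h : {ω : ℕ → Bool | countTrue ω t < μ ∧ ω t = false}
      = ((fun ω => countTrue ω t) ⁻¹' {n | n < μ}) ∩ ((fun ω : ℕ → Bool => ω t) ⁻¹' {false}) :=
    rfl
  rw [h]
  exact ((measurable_countTrue t) MeasurableSet.of_discrete).inter
    ((measurable_pi_apply t) MeasurableSet.of_discrete)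

lemma measurable_hOfN (μ : ℕ) : Measurable (hOfN μ) := by
  have h : hOfN μ = fun ω => ∑' t : ℕ,
      if countTrue ω t < μ ∧ ω t = false then (1 : ℝ≥0∞) else 0 := funext (hOfN_eq μ)
  rw [h]
  exact Measurable.ennreal_tsum fun t =>
    Measurable.ite (measurableSet_cond μ t) measurable_const measurable_const

lemma measurable_wOfN (μ : ℕ) (w : ℕ → (ℕ → Bool) → ℝ≥0∞) (hmeas : ∀ t, Measurable (w t)) :
    Measurable (wOfN μ w) := by
  have h : wOfN μ w = fun ω => ∑' t : ℕ,
      if countTrue ω t < μ ∧ ω t = false then w t ω else 0 := funext (wOfN_eq μ w)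
  rw [h]
  exact Measurable.ennreal_tsum fun t =>
    Measurable.ite (measurableSet_cond μ t) (hmeas t) measurable_const

lemma measurable_wOfS (μ : ℕ) (w : ℕ → (ℕ → Bool) → ℝ≥0∞) (hmeas : ∀ t, Measurable (w t)) :
    Measurable (wOfS μ w) := by
  unfold wOfS
  exact Measurable.ite ((measurable_hOfN μ) measurableSet_Iic)
    (measurable_wOfN μ w hmeas) measurable_const

lemma card_filter_false_add (ω : ℕ → Bool) (m : ℕ) :
    ((Finset.range m).filter fun t => ω t = false).card + countTrue ω m = m := by
  rw [countTrue]
  have h1 : ((Finset.range m).filter fun t => ω t = false)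
      = (Finset.range m).filter fun t => ¬(ω t = true) := by
    apply Finset.filter_congr
    intro t _
    simp
  rw [h1, add_comm, Finset.card_filter_add_card_filter_not, Finset.card_range]

lemma hOfN_le_of_countTrue {μ : ℕ} {ω : ℕ → Bool} {m : ℕ} (h : μ ≤ countTrue ω m) :
    hOfN μ ω ≤ ((m - μ : ℕ) : ℝ≥0∞) := by
  rw [hOfN_eq]
  rw [tsum_eq_sum (s := Finset.range m) ?_]
  · rw [Finset.sum_boole]
    have h2 : ((Finset.range m).filter fun t => countTrue ω t < μ ∧ ω t = false).card
        ≤ m - μ := by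
      have h3 : ((Finset.range m).filter fun t => countTrue ω t < μ ∧ ω t = false)
          ⊆ (Finset.range m).filter fun t => ω t = false :=
        Finset.monotone_filter_right _ (fun t _ ht => ht.2)
      have h4 := Finset.card_le_card h3
      have h5 := card_filter_false_add ω m
      omega
    exact_mod_cast Nat.cast_le.mpr h2
  · intro t ht
    have hmt : m ≤ t := by simpa using ht
    rw [if_neg]
    rintro ⟨h1, -⟩
    exact absurd (h.trans (countTrue_mono ω hmt)) (not_le.2 h1)

end Counting

section Prob

lemma prob_countTrue_lt {p : ℝ} {P : Measure (ℕ → Bool)} (hp1 : p ≤ 1) (hq1 : 1 - p ≤ 1)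
    (hP : IsBernoulliProduct p P) {μ m : ℕ} (hμ : 1 ≤ μ) (hm : μ ≤ m) :
    P {ω | countTrue ω m < μ} ≤ 2 ^ m * (ENNReal.ofReal (1 - p)) ^ (m + 1 - μ) := by
  set Q := ENNReal.ofReal (1 - p) with hQdef
  have hQ1 : Q ≤ 1 := ENNReal.ofReal_le_one.2 hq1
  have hp1' : ENNReal.ofReal p ≤ 1 := ENNReal.ofReal_le_one.2 hp1
  set I := (Finset.range m).powerset.filter (fun s => s.card < μ) with hI
  have cover : {ω : ℕ → Bool | countTrue ω m < μ} ⊆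
      ⋃ s ∈ I, {ω : ℕ → Bool | ∀ i ∈ Finset.range m, ω i = decide (i ∈ s)} := by
    intro ω hω
    refine Set.mem_biUnion (x := (Finset.range m).filter fun t => ω t = true)
      (Finset.mem_coe.2 (Finset.mem_filter.2
        ⟨Finset.mem_powerset.2 (Finset.filter_subset _ _), hω⟩)) ?_
    intro i hi
    cases hb : ω i <;> simp [Finset.mem_filter, hi, hb]
  have single : ∀ s ∈ I, P {ω : ℕ → Bool | ∀ i ∈ Finset.range m, ω i = decide (i ∈ s)}
      ≤ Q ^ (m + 1 - μ) := by
    intro s hs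
    obtain ⟨hsub, hcard⟩ : s ⊆ Finset.range m ∧ s.card < μ := by
      simpa [hI, Finset.mem_filter, Finset.mem_powerset] using hs
    rw [hP (Finset.range m) (fun i => decide (i ∈ s))]
    calc ∏ i ∈ Finset.range m, (if decide (i ∈ s) = true then ENNReal.ofReal p else Q)
        ≤ ∏ i ∈ Finset.range m, (if decide (i ∈ s) = true then 1 else Q) := by
          refine Finset.prod_le_prod' fun i _ => ?_
          split
          · exact hp1'
          · exact le_rfl
      _ = Q ^ ((Finset.range m).filter (fun i => ¬(decide (i ∈ s) = true))).card := by
          rw [Finset.prod_ite, Finset.prod_const_one, Finset.prod_const, one_mul]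
      _ ≤ Q ^ (m + 1 - μ) := by
          apply pow_le_pow_of_le_one zero_le hQ1
          have h1 : ((Finset.range m).filter (fun i => (decide (i ∈ s) = true))).card
              = s.card := by
            simp only [decide_eq_true_eq]
            rw [Finset.filter_mem_eq_inter, Finset.inter_eq_right.2 hsub]
          have h2 := Finset.card_filter_add_card_filter_not
            (s := Finset.range m) (p := fun i => decide (i ∈ s) = true)
          rw [Finset.card_range, h1] at h2
          omega
  calc P {ω | countTrue ω m < μ}
      ≤ ∑ s ∈ I, P {ω : ℕ → Bool | ∀ i ∈ Finset.range m, ω i = decide (i ∈ s)} :=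
        (measure_mono cover).trans (measure_biUnion_finset_le I _)
    _ ≤ ∑ _s ∈ I, Q ^ (m + 1 - μ) := Finset.sum_le_sum single
    _ = (I.card : ℝ≥0∞) * Q ^ (m + 1 - μ) := by rw [Finset.sum_const, nsmul_eq_mul]
    _ ≤ 2 ^ m * Q ^ (m + 1 - μ) := by
        refine mul_le_mul_left ?_ _
        have hc : I.card ≤ 2 ^ m := by
          calc I.card ≤ (Finset.range m).powerset.card :=
                Finset.card_le_card (Finset.filter_subset _ _)
            _ = 2 ^ m := by rw [Finset.card_powerset, Finset.card_range]
        exact_mod_cast Nat.cast_le.mpr hc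

lemma wOfS_on_cyl {μ : ℕ} (hμ : 1 ≤ μ) (w : ℕ → (ℕ → Bool) → ℝ≥0∞)
    (hdep : ∀ (t : ℕ) (ω ω' : ℕ → Bool), (∀ s < t, ω s = ω' s) → w t ω = w t ω')
    {ω : ℕ → Bool} (hω : ∀ i ∈ Finset.range (μ + 1), ω i = decide (i ≠ 0)) :
    wOfS μ w ω = w 0 (fun _ => true) := by
  have hω0 : ω 0 = false := by simpa using hω 0 (Finset.mem_range.2 (by omega))
  have hωt : ∀ t, 1 ≤ t → t ≤ μ → ω t = true := fun t h1 h2 => by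
    have h3 := hω t (Finset.mem_range.2 (by omega))
    rw [h3]
    simp
    omega
  have hcount : countTrue ω (μ + 1) = μ := by
    have hfilter : (Finset.range (μ + 1)).filter (fun t => ω t = false) = {0} := by
      ext t
      simp only [Finset.mem_filter, Finset.mem_range, Finset.mem_singleton]
      constructor
      · rintro ⟨h1, h2⟩
        by_contra ht
        rw [hωt t (by omega) (by omega)] at h2
        exact absurd h2 (by simp)
      · rintro rfl
        exact ⟨by omega, hω0⟩
    have := card_filter_false_add ω (μ + 1)
    rw [hfilter] at this
    simp at this
    omega
  have hcond : ∀ t : ℕ, t ≠ 0 → ¬(countTrue ω t < μ ∧ ω t = false) := by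
    rintro t ht ⟨h1, h2⟩
    rcases le_or_gt t μ with h | h
    · rw [hωt t (by omega) h] at h2
      exact absurd h2 (by simp)
    · have : μ ≤ countTrue ω t := hcount ▸ countTrue_mono ω (by omega : μ + 1 ≤ t)
      omega
  have hc0 : countTrue ω 0 = 0 := by simp [countTrue]
  have hwN : wOfN μ w ω = w 0 ω := by
    rw [wOfN_eq, tsum_eq_single 0 (fun t ht => if_neg (hcond t ht))]
    rw [if_pos ⟨by omega, hω0⟩]
  have hH : hOfN μ ω = 1 := by
    rw [hOfN_eq, tsum_eq_single 0 (fun t ht => if_neg (hcond t ht))]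
    rw [if_pos ⟨by omega, hω0⟩]
  rw [wOfS, if_pos (by rw [hH]; exact_mod_cast Nat.one_le_cast.2 hμ), hwN]
  exact hdep 0 ω (fun _ => true) (fun s hs => absurd hs (Nat.not_lt_zero s))

lemma layer_bound (μ : ℕ) (ω : ℕ → Bool) :
    (if (μ : ℝ≥0∞) < hOfN μ ω then hOfN μ ω else 0) ≤
      (μ : ℝ≥0∞) * (if countTrue ω (μ + μ) < μ then 1 else 0) +
        ∑' k : ℕ, (if countTrue ω (μ + μ + k) < μ then (1 : ℝ≥0∞) else 0) := by
  by_cases h0 : countTrue ω (μ + μ) < μ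
  case neg =>
    push_neg at h0
    have h1 : hOfN μ ω ≤ (μ : ℝ≥0∞) := by
      have h2 := hOfN_le_of_countTrue h0
      have h3 : μ + μ - μ = μ := by omega
      rwa [h3] at h2
    rw [if_neg (not_lt.2 h1)]
    exact zero_le
  case pos =>
    have hle : (if (μ : ℝ≥0∞) < hOfN μ ω then hOfN μ ω else 0) ≤ hOfN μ ω := by
      split
      · exact le_rfl
      · exact zero_le
    refine hle.trans ?_
    by_cases hall : ∀ K : ℕ, countTrue ω (μ + μ + K) < μ
    · have htop : ∑' k : ℕ, (if countTrue ω (μ + μ + k) < μ then (1 : ℝ≥0∞) else 0) = ⊤ := by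
        rw [tsum_congr (fun k => if_pos (hall k))]
        exact ENNReal.tsum_const_eq_top_of_ne_zero one_ne_zero
      rw [htop]
      simp
    · push_neg at hall
      have hK := Nat.find_spec hall
      set K := Nat.find hall with hKdef
      have hmin : ∀ j < K, countTrue ω (μ + μ + j) < μ := fun j hj =>
        not_le.1 (Nat.find_min hall hj)
      have h2 : hOfN μ ω ≤ ((μ + K : ℕ) : ℝ≥0∞) := by
        have h3 := hOfN_le_of_countTrue hK
        have h4 : μ + μ + K - μ = μ + K := by omega
        rwa [h4] at h3
      have h3 : (K : ℝ≥0∞) ≤ ∑' k : ℕ, (if countTrue ω (μ + μ + k) < μ then (1 : ℝ≥0∞) else 0) := by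
        calc (K : ℝ≥0∞) = ∑ _k ∈ Finset.range K, (1 : ℝ≥0∞) := by simp
          _ = ∑ k ∈ Finset.range K, (if countTrue ω (μ + μ + k) < μ then (1 : ℝ≥0∞) else 0) :=
            Finset.sum_congr rfl fun k hk => (if_pos (hmin k (Finset.mem_range.1 hk))).symm
          _ ≤ _ := ENNReal.sum_le_tsum _
      calc hOfN μ ω ≤ ((μ + K : ℕ) : ℝ≥0∞) := h2
        _ = (μ : ℝ≥0∞) * 1 + (K : ℝ≥0∞) := by push_cast; ring
        _ ≤ _ := by
            rw [if_pos h0]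
            exact add_le_add le_rfl h3

lemma lint_ind (P : Measure (ℕ → Bool)) (μ m : ℕ) :
    ∫⁻ ω, (if countTrue ω m < μ then (1 : ℝ≥0∞) else 0) ∂P = P {ω | countTrue ω m < μ} := by
  have hs : MeasurableSet {ω : ℕ → Bool | countTrue ω m < μ} := by
    have h : {ω : ℕ → Bool | countTrue ω m < μ}
        = (fun ω => countTrue ω m) ⁻¹' {n | n < μ} := rfl
    rw [h]
    exact (measurable_countTrue m) MeasurableSet.of_discrete
  rw [← lintegral_indicator_one hs]
  exact lintegral_congr fun ω => by
    by_cases h : countTrue ω m < μ <;> simp [Set.indicator_apply, h]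

end Prob

section Estimate

lemma real_ineq (μ : ℕ) (hμ : 1 ≤ μ) (q β : ℝ) (hq : 0 < q)
    (hβ : β = 2 * Real.exp 1 * q) (hβ1 : β < 1) :
    (μ : ℝ) * (2 ^ (μ + μ) * q ^ (μ + 1)) + (2 ^ (μ + μ) * q ^ (μ + 1)) * (1 - 2 * q)⁻¹ ≤
      (((μ : ℝ) + 1 - μ * β) * β ^ μ / (1 - β) ^ 2) * (q * (1 - q) ^ μ) := by
  have he : (2.7182818283 : ℝ) < Real.exp 1 := Real.exp_one_gt_d9
  set e := Real.exp 1 with hee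
  have he1 : (2.5 : ℝ) ≤ e := by linarith
  have hepos : (0 : ℝ) < e := by linarith
  have hβpos : 0 < β := by rw [hβ]; positivity
  have h2q : 2 * q ≤ β := by nlinarith
  have h2q1 : 2 * q < 1 := lt_of_le_of_lt h2q hβ1
  have hd : (0 : ℝ) < 1 - β := by linarith
  have h2d : (0 : ℝ) < 1 - 2 * q := by linarith
  have hq1 : q < 1 := by linarith
  have hqe : q = β / (2 * e) := by rw [hβ]; field_simp
  have hq' : q ≤ 1 / (2 * e) := by
    rw [hqe]
    gcongr
  have hpe : 2 / e ≤ 1 - q := by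
    have h1 : 2 / e + 1 / (2 * e) ≤ 1 := by
      rw [div_add_div _ _ (by positivity) (by positivity), div_le_one (by positivity)]
      nlinarith
    linarith
  have key : (2 : ℝ) ^ (μ + μ) * q ^ (μ + 1) = q * ((2 / e) ^ μ * β ^ μ) := by
    have h4 : ((2 : ℝ) / e) * β = 4 * q := by rw [hβ]; field_simp; ring
    have h5 : (4 : ℝ) ^ μ = 2 ^ (μ + μ) := by rw [pow_add, ← mul_pow]; norm_num
    calc (2 : ℝ) ^ (μ + μ) * q ^ (μ + 1) = (4 * q) ^ μ * q := by
          rw [mul_pow, h5, pow_succ]; ring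
      _ = ((2 / e) * β) ^ μ * q := by rw [h4]
      _ = q * ((2 / e) ^ μ * β ^ μ) := by rw [mul_pow]; ring
  have b1 : ((2 : ℝ) / e) ^ μ ≤ (1 - q) ^ μ := pow_le_pow_left₀ (by positivity) hpe μ
  have b2 : (1 - 2 * q)⁻¹ ≤ (1 - β)⁻¹ := by
    apply inv_anti₀ hd
    linarith
  have binv : (0:ℝ) < (1 - 2*q)⁻¹ := by positivity
  have b3 : (μ : ℝ) + (1 - β)⁻¹ ≤ ((μ : ℝ) + 1 - μ * β) / (1 - β) ^ 2 := by
    rw [le_div_iff₀ (by positivity)]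
    have hid : ((μ : ℝ) + (1 - β)⁻¹) * (1 - β) ^ 2 = μ * (1 - β) ^ 2 + (1 - β) := by
      field_simp
    rw [hid]
    have hμ0 : (0 : ℝ) ≤ (μ : ℝ) := Nat.cast_nonneg μ
    nlinarith [mul_nonneg hμ0 (mul_nonneg hd.le hβpos.le)]
  have hμ0 : (0 : ℝ) ≤ (μ : ℝ) := Nat.cast_nonneg μ
  calc (μ : ℝ) * (2 ^ (μ + μ) * q ^ (μ + 1)) + (2 ^ (μ + μ) * q ^ (μ + 1)) * (1 - 2 * q)⁻¹
      = (q * β ^ μ) * ((2 / e) ^ μ * ((μ : ℝ) + (1 - 2 * q)⁻¹)) := by rw [key]; ring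
    _ ≤ (q * β ^ μ) * ((1 - q) ^ μ * (((μ : ℝ) + 1 - μ * β) / (1 - β) ^ 2)) := by
        refine mul_le_mul_of_nonneg_left ?_
          (mul_nonneg hq.le (pow_nonneg hβpos.le μ))
        refine mul_le_mul b1 ?_ (by linarith) (pow_nonneg (by linarith) μ)
        calc (μ : ℝ) + (1 - 2 * q)⁻¹ ≤ (μ : ℝ) + (1 - β)⁻¹ := by linarith
          _ ≤ _ := b3
    _ = (((μ : ℝ) + 1 - μ * β) * β ^ μ / (1 - β) ^ 2) * (q * (1 - q) ^ μ) := by ring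
end Estimate

lemma ennreal_estimate (p β : ℝ) (hp0 : 0 < p) (hp1 : p < 1) (μ : ℕ) (hμ : 1 ≤ μ)
    (hβ : β = 2 * Real.exp 1 * (1 - p)) (hβ1 : β < 1) :
    (μ : ℝ≥0∞) * (2 ^ (μ + μ) * (ENNReal.ofReal (1 - p)) ^ (μ + 1)) +
      ∑' k : ℕ, (2 ^ (μ + μ + k) * (ENNReal.ofReal (1 - p)) ^ (μ + k + 1)) ≤
      ENNReal.ofReal ((((μ : ℝ) + 1 - μ * β) * β ^ μ / (1 - β) ^ 2) * ((1 - p) * p ^ μ)) := by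
  set Q := ENNReal.ofReal (1 - p) with hQdef
  have hq0 : (0 : ℝ) < 1 - p := by linarith
  have he : (2.7182818283 : ℝ) < Real.exp 1 := Real.exp_one_gt_d9
  have h2q : 2 * (1 - p) ≤ β := by nlinarith
  have h2q1 : 2 * (1 - p) < 1 := lt_of_le_of_lt h2q hβ1
  have h2d : (0 : ℝ) < 1 - 2 * (1 - p) := by linarith
  have hts : ∑' k : ℕ, ((2 : ℝ≥0∞) ^ (μ + μ + k) * Q ^ (μ + k + 1))
      = (2 ^ (μ + μ) * Q ^ (μ + 1)) * (1 - 2 * Q)⁻¹ := by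
    have h1 : ∀ k : ℕ, (2 : ℝ≥0∞) ^ (μ + μ + k) * Q ^ (μ + k + 1)
        = (2 ^ (μ + μ) * Q ^ (μ + 1)) * (2 * Q) ^ k := by
      intro k
      have h2 : μ + k + 1 = (μ + 1) + k := by omega
      rw [h2, pow_add, pow_add, mul_pow]
      ring
    rw [tsum_congr h1, ENNReal.tsum_mul_left, ENNReal.tsum_geometric]
  rw [hts]
  have h2Q : (2 : ℝ≥0∞) * Q = ENNReal.ofReal (2 * (1 - p)) := by
    rw [ENNReal.ofReal_mul (by norm_num), ENNReal.ofReal_ofNat]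
  have hsub : (1 : ℝ≥0∞) - 2 * Q = ENNReal.ofReal (1 - 2 * (1 - p)) := by
    rw [h2Q, ← ENNReal.ofReal_one, ← ENNReal.ofReal_sub _ (by positivity)]
  have hinv : ((1 : ℝ≥0∞) - 2 * Q)⁻¹ = ENNReal.ofReal ((1 - 2 * (1 - p))⁻¹) := by
    rw [hsub, ← ENNReal.ofReal_inv_of_pos h2d]
  have hpow : (2 : ℝ≥0∞) ^ (μ + μ) * Q ^ (μ + 1)
      = ENNReal.ofReal (2 ^ (μ + μ) * (1 - p) ^ (μ + 1)) := by
    rw [ENNReal.ofReal_mul (by positivity), ENNReal.ofReal_pow (by norm_num),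
      ENNReal.ofReal_pow hq0.le, ENNReal.ofReal_ofNat]
  have hμE : (μ : ℝ≥0∞) = ENNReal.ofReal (μ : ℝ) := (ENNReal.ofReal_natCast μ).symm
  rw [hpow, hinv, hμE, ← ENNReal.ofReal_mul (Nat.cast_nonneg μ),
    ← ENNReal.ofReal_mul (by positivity),
    ← ENNReal.ofReal_add (by positivity) (by positivity)]
  refine ENNReal.ofReal_le_ofReal ?_
  have hfix : (1 - (1 - p)) = p := by ring
  have := real_ineq μ hμ (1 - p) β hq0 hβ hβ1
  rwa [hfix] at this


theorem expectation_wN_le_expectation_wS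
    (p : ℝ) (hp0 : 0 < p) (hp1 : p < 1)
    (P : Measure (ℕ → Bool)) [IsProbabilityMeasure P] (hP : IsBernoulliProduct p P)
    (μ : ℕ) (hμ : 1 ≤ μ)
    (w : ℕ → (ℕ → Bool) → ℝ≥0∞)
    (hmeas : ∀ t, Measurable (w t))
    (hdep : ∀ (t : ℕ) (ω ω' : ℕ → Bool), (∀ s < t, ω s = ω' s) → w t ω = w t ω')
    (hdec : ∀ (i j : ℕ) (ω : ℕ → Bool), i ≤ j → w j ω ≤ w i ω)
    (β : ℝ) (hβ : β = 2 * Real.exp 1 * (1 - p)) (hβ1 : β < 1) :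
    ∫⁻ ω, wOfN μ w ω ∂P ≤
      ∫⁻ ω, wOfS μ w ω ∂P +
        ENNReal.ofReal (((μ : ℝ) + 1 - (μ : ℝ) * β) * β ^ μ / (1 - β) ^ 2) *
          ∫⁻ ω, wOfS μ w ω ∂P := by
  have hq0 : (0 : ℝ) < 1 - p := by linarith
  have he : (2.7182818283 : ℝ) < Real.exp 1 := Real.exp_one_gt_d9
  have hβpos : 0 < β := by rw [hβ]; positivity
  have hCnn : 0 ≤ ((μ : ℝ) + 1 - (μ : ℝ) * β) * β ^ μ / (1 - β) ^ 2 := by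
    have hμ0 : (0 : ℝ) ≤ (μ : ℝ) := Nat.cast_nonneg μ
    have h1 : (0 : ℝ) ≤ (μ : ℝ) + 1 - (μ : ℝ) * β := by nlinarith
    positivity
  set Q := ENNReal.ofReal (1 - p) with hQdef
  set C0 := w 0 (fun _ => true) with hC0
  have hwle : ∀ t ω, w t ω ≤ C0 := fun t ω =>
    (hdec 0 t ω (Nat.zero_le t)).trans
      (le_of_eq (hdep 0 ω (fun _ => true) (fun s hs => absurd hs (Nat.not_lt_zero s))))
  have hSmeas := measurable_wOfS μ w hmeas
  -- pointwise decomposition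
  have hdecomp : ∀ ω, wOfN μ w ω
      = wOfS μ w ω + (if (μ : ℝ≥0∞) < hOfN μ ω then wOfN μ w ω else 0) := by
    intro ω
    unfold wOfS
    by_cases h : hOfN μ ω ≤ (μ : ℝ≥0∞)
    · rw [if_pos h, if_neg (not_lt.2 h), add_zero]
    · rw [if_neg h, if_pos (not_le.1 h), zero_add]
  rw [lintegral_congr hdecomp, lintegral_add_left hSmeas]
  refine add_le_add_right ?_ _
  -- lower bound for wOfS integral via the cylinder E0
  set b0 : ℕ → Bool := fun i => decide (i ≠ 0) with hb0
  set E0 : Set (ℕ → Bool) := {ω | ∀ i ∈ Finset.range (μ + 1), ω i = b0 i} with hE0def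
  have hE0meas : MeasurableSet E0 := by
    have h : E0 = ⋂ i ∈ Finset.range (μ + 1), {ω : ℕ → Bool | ω i = b0 i} := by
      ext ω; simp [hE0def]
    rw [h]
    refine MeasurableSet.iInter fun i => MeasurableSet.iInter fun _ => ?_
    have h2 : {ω : ℕ → Bool | ω i = b0 i} = (fun ω : ℕ → Bool => ω i) ⁻¹' {b | b = b0 i} := rfl
    exact h2 ▸ (measurable_pi_apply i) MeasurableSet.of_discrete
  have hPE0 : P E0 = (ENNReal.ofReal p) ^ μ * Q := by
    rw [hE0def, hP (Finset.range (μ + 1)) b0, Finset.prod_range_succ']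
    have h1 : ∀ i : ℕ, (if b0 (i + 1) = true then ENNReal.ofReal p else ENNReal.ofReal (1 - p))
        = ENNReal.ofReal p := fun i => by simp [hb0]
    rw [Finset.prod_congr rfl (fun i _ => h1 i), Finset.prod_const, Finset.card_range]
    simp [hb0, hQdef]
  have hlow : (ENNReal.ofReal p) ^ μ * Q * C0 ≤ ∫⁻ ω, wOfS μ w ω ∂P := by
    calc (ENNReal.ofReal p) ^ μ * Q * C0 = C0 * P E0 := by rw [hPE0]; ring
      _ = ∫⁻ _ω in E0, C0 ∂P := (setLIntegral_const E0 C0).symm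
      _ = ∫⁻ ω in E0, wOfS μ w ω ∂P := by
          refine setLIntegral_congr_fun hE0meas (fun ω hω => ?_)
          exact (wOfS_on_cyl hμ w hdep hω).symm
      _ ≤ ∫⁻ ω, wOfS μ w ω ∂P := setLIntegral_le_lintegral _ _
  -- bound the tail term
  have hGH : ∀ ω, (if (μ : ℝ≥0∞) < hOfN μ ω then wOfN μ w ω else 0) ≤
      C0 * (if (μ : ℝ≥0∞) < hOfN μ ω then hOfN μ ω else 0) := by
    intro ω
    split
    · rw [wOfN_eq]
      calc ∑' t : ℕ, (if countTrue ω t < μ ∧ ω t = false then w t ω else 0)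
          ≤ ∑' t : ℕ, C0 * (if countTrue ω t < μ ∧ ω t = false then 1 else 0) := by
            refine ENNReal.tsum_le_tsum fun t => ?_
            split
            · rw [mul_one]; exact hwle t ω
            · simp
        _ = C0 * hOfN μ ω := by rw [ENNReal.tsum_mul_left, ← hOfN_eq]
    · simp
  have hHmeas : Measurable (fun ω => if (μ : ℝ≥0∞) < hOfN μ ω then hOfN μ ω else 0) := by
    have h : {ω : ℕ → Bool | (μ : ℝ≥0∞) < hOfN μ ω} = (hOfN μ) ⁻¹' (Set.Ioi (μ : ℝ≥0∞)) := rfl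
    exact Measurable.ite (h ▸ (measurable_hOfN μ) measurableSet_Ioi)
      (measurable_hOfN μ) measurable_const
  have hIG : ∫⁻ ω, (if (μ : ℝ≥0∞) < hOfN μ ω then wOfN μ w ω else 0) ∂P ≤
      C0 * ∫⁻ ω, (if (μ : ℝ≥0∞) < hOfN μ ω then hOfN μ ω else 0) ∂P := by
    rw [← lintegral_const_mul C0 hHmeas]
    exact lintegral_mono hGH
  -- layer-cake bound for the integral of the truncated count
  have hlayer : ∫⁻ ω, (if (μ : ℝ≥0∞) < hOfN μ ω then hOfN μ ω else 0) ∂P ≤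
      (μ : ℝ≥0∞) * P {ω | countTrue ω (μ + μ) < μ}
        + ∑' k : ℕ, P {ω | countTrue ω (μ + μ + k) < μ} := by
    have hmeas1 : ∀ m : ℕ, Measurable fun ω : ℕ → Bool =>
        (if countTrue ω m < μ then (1 : ℝ≥0∞) else 0) := by
      intro m
      have h : {ω : ℕ → Bool | countTrue ω m < μ}
          = (fun ω => countTrue ω m) ⁻¹' {n | n < μ} := rfl
      exact Measurable.ite (h ▸ (measurable_countTrue m) MeasurableSet.of_discrete)
        measurable_const measurable_const
    calc ∫⁻ ω, (if (μ : ℝ≥0∞) < hOfN μ ω then hOfN μ ω else 0) ∂P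
        ≤ ∫⁻ ω, ((μ : ℝ≥0∞) * (if countTrue ω (μ + μ) < μ then 1 else 0) +
            ∑' k : ℕ, (if countTrue ω (μ + μ + k) < μ then (1 : ℝ≥0∞) else 0)) ∂P :=
          lintegral_mono (fun ω => layer_bound μ ω)
      _ = (μ : ℝ≥0∞) * ∫⁻ ω, (if countTrue ω (μ + μ) < μ then (1 : ℝ≥0∞) else 0) ∂P +
          ∑' k : ℕ, ∫⁻ ω, (if countTrue ω (μ + μ + k) < μ then (1 : ℝ≥0∞) else 0) ∂P := by
          rw [lintegral_add_left (((hmeas1 (μ + μ)).const_mul _)),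
            lintegral_const_mul _ (hmeas1 (μ + μ)),
            lintegral_tsum (fun k => (hmeas1 (μ + μ + k)).aemeasurable)]
      _ = (μ : ℝ≥0∞) * P {ω | countTrue ω (μ + μ) < μ}
            + ∑' k : ℕ, P {ω | countTrue ω (μ + μ + k) < μ} := by
          rw [lint_ind P μ (μ + μ)]
          congr 1
          exact tsum_congr fun k => lint_ind P μ (μ + μ + k)
  -- probability estimates
  have hq1' : 1 - p ≤ 1 := by linarith
  have hprob0 : P {ω | countTrue ω (μ + μ) < μ} ≤ 2 ^ (μ + μ) * Q ^ (μ + 1) := by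
    have h := prob_countTrue_lt hp1.le hq1' hP hμ (show μ ≤ μ + μ by omega)
    have he2 : μ + μ + 1 - μ = μ + 1 := by omega
    rwa [he2] at h
  have hprob : ∀ k, P {ω | countTrue ω (μ + μ + k) < μ} ≤ 2 ^ (μ + μ + k) * Q ^ (μ + k + 1) := by
    intro k
    have h := prob_countTrue_lt hp1.le hq1' hP hμ (show μ ≤ μ + μ + k by omega)
    have he2 : μ + μ + k + 1 - μ = μ + k + 1 := by omega
    rwa [he2] at h
  have hmain : ∫⁻ ω, (if (μ : ℝ≥0∞) < hOfN μ ω then hOfN μ ω else 0) ∂P ≤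
      ENNReal.ofReal ((((μ : ℝ) + 1 - μ * β) * β ^ μ / (1 - β) ^ 2) * ((1 - p) * p ^ μ)) :=
    hlayer.trans <| (add_le_add (mul_le_mul_right hprob0 _) (ENNReal.tsum_le_tsum hprob)).trans
      (ennreal_estimate p β hp0 hp1 μ hμ hβ hβ1)
  -- put everything together
  calc ∫⁻ ω, (if (μ : ℝ≥0∞) < hOfN μ ω then wOfN μ w ω else 0) ∂P
      ≤ C0 * ∫⁻ ω, (if (μ : ℝ≥0∞) < hOfN μ ω then hOfN μ ω else 0) ∂P := hIG
    _ ≤ C0 * ENNReal.ofReal ((((μ : ℝ) + 1 - μ * β) * β ^ μ / (1 - β) ^ 2)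
          * ((1 - p) * p ^ μ)) := mul_le_mul_right hmain _
    _ = ENNReal.ofReal (((μ : ℝ) + 1 - (μ : ℝ) * β) * β ^ μ / (1 - β) ^ 2) *
          ((ENNReal.ofReal p) ^ μ * Q * C0) := by
        rw [ENNReal.ofReal_mul hCnn, ENNReal.ofReal_mul hq0.le,
          ENNReal.ofReal_pow hp0.le]
        ring
    _ ≤ ENNReal.ofReal (((μ : ℝ) + 1 - (μ : ℝ) * β) * β ^ μ / (1 - β) ^ 2) *
          ∫⁻ ω, wOfS μ w ω ∂P := mul_le_mul_right hlow _

end
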